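/- arXiv:2211.16302 — 4 statements merged into one kernel-verified Lean document; each statement's English description precedes it below -/
import Mathlib

section
/- For any integer r ≥ 2 and any pseudo-differential operator A of the form A = ∂_x^r + Σ_{n ≥ 1} a_n ∂_x^{r−n} over a commutative differential ℚ-algebra, there exists a unique pseudo-differential operator B of the form B = ∂_x + Σ_{n ≥ 0} b_n ∂_x^{−n} such that B^r = A (r-fold composition). -/
open Finset

/-- The generalized binomial coefficient `k(k−1)⋯(k−l+1)/l!` for `k : ℤ`. -/
def genBinom (k : ℤ) (l : ℕ) : ℚ :=
  (∏ i ∈ Finset.range l, ((k : ℚ) - (i : ℚ))) / (Nat.factorial l : ℚ)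

/-- A pseudo-differential operator `Σ_{n ≤ bound} a_n ∂ₓ^n` with coefficients in `R`:
a family of coefficients `a_n` indexed by `n : ℤ`, vanishing above some bound. -/
structure PDO (R : Type*) [CommRing R] where
  coeff : ℤ → R
  bound : ℤ
  coeff_eq_zero : ∀ n : ℤ, bound < n → coeff n = 0

variable {R : Type*} [CommRing R] [Algebra ℚ R]

/-- The coefficient of `∂ₓ^n` in the composition `A ∘ B`, determined by the generalized
Leibniz rule `∂ₓ^k ∘ f = Σ_{l ≥ 0} (k(k−1)⋯(k−l+1)/l!)(∂^l f) ∂ₓ^{k−l}` together with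
bilinearity and continuity: the terms `a_k · (k…(k−l+1)/l!) ∂^l(b_j)` with
`k − l + j = n` are parametrized by `k = n − B.bound + p` and `l ≤ p`. -/
def pdoCompCoeff (D : Derivation ℚ R R) (A B : PDO R) (n : ℤ) : R :=
  ∑ p ∈ Finset.range (A.bound + B.bound + 1 - n).toNat,
    ∑ l ∈ Finset.range (p + 1),
      A.coeff (n - B.bound + p) *
        (genBinom (n - B.bound + p) l • (⇑D)^[l] (B.coeff (B.bound - p + l)))

/-- Composition of pseudo-differential operators. -/
def pdoComp (D : Derivation ℚ R R) (A B : PDO R) : PDO R where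
  coeff := pdoCompCoeff D A B
  bound := A.bound + B.bound
  coeff_eq_zero := by
    intro n hn
    have h : (A.bound + B.bound + 1 - n).toNat = 0 := by omega
    simp [pdoCompCoeff, h]

/-- The pseudo-differential operator `∂ₓ^k`. -/
def pdoDelta (k : ℤ) : PDO R where
  coeff := fun n => if n = k then 1 else 0
  bound := k
  coeff_eq_zero := by
    intro n hn
    rw [if_neg (by omega)]

/-- The identity pseudo-differential operator `1 = ∂ₓ^0`. -/
def pdoOne : PDO R := pdoDelta 0

/-- Iterated composition power `A^n` of a pseudo-differential operator. -/
def pdoNpow (D : Derivation ℚ R R) (A : PDO R) : ℕ → PDO R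
  | 0 => pdoOne
  | n + 1 => pdoComp D A (pdoNpow D A n)

/-- The differential-operator part `A₊ = Σ_{n ≥ 0} a_n ∂ₓ^n`. -/
def pdoPlus (A : PDO R) : PDO R where
  coeff := fun n => if 0 ≤ n then A.coeff n else 0
  bound := max A.bound 0
  coeff_eq_zero := by
    intro n hn
    by_cases h : 0 ≤ n
    · rw [if_pos h]; exact A.coeff_eq_zero n (by omega)
    · rw [if_neg h]

/-- The purely negative part `A₋ = A − A₊ = Σ_{n ≤ −1} a_n ∂ₓ^n`. -/
def pdoMinus (A : PDO R) : PDO R where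
  coeff := fun n => if n < 0 then A.coeff n else 0
  bound := -1
  coeff_eq_zero := by
    intro n hn
    rw [if_neg (by omega)]


/-! ### Auxiliary lemmas -/

@[simp] lemma genBinom_zero (k : ℤ) : genBinom k 0 = 1 := by simp [genBinom]

lemma iterD_zero (D : Derivation ℚ R R) (l : ℕ) : (⇑D)^[l] (0 : R) = 0 :=
  Function.iterate_fixed (map_zero D) l

lemma iterD_sub (D : Derivation ℚ R R) (l : ℕ) (x y : R) :
    (⇑D)^[l] (x - y) = (⇑D)^[l] x - (⇑D)^[l] y := by
  induction l generalizing x y with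
  | zero => simp
  | succ l ih => rw [Function.iterate_succ_apply, Function.iterate_succ_apply,
      Function.iterate_succ_apply, map_sub, ih]

@[simp] lemma pdoComp_coeff (D : Derivation ℚ R R) (A B : PDO R) :
    (pdoComp D A B).coeff = pdoCompCoeff D A B := rfl

lemma pdoNpow_succ (D : Derivation ℚ R R) (A : PDO R) (n : ℕ) :
    pdoNpow D A (n + 1) = pdoComp D A (pdoNpow D A n) := rfl

lemma pdoCompCoeff_ext (D : Derivation ℚ R R) {A A' B B' : PDO R}
    (h1 : A.coeff = A'.coeff) (h2 : A.bound = A'.bound)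
    (h3 : B.coeff = B'.coeff) (h4 : B.bound = B'.bound) (n : ℤ) :
    pdoCompCoeff D A B n = pdoCompCoeff D A' B' n := by
  unfold pdoCompCoeff
  rw [h1, h2, h3, h4]
set_option linter.unusedSectionVars false

/-- `A` with its bound raised to `a`. -/
def PDO.raiseTo (A : PDO R) (a : ℤ) (h : A.bound ≤ a) : PDO R :=
  ⟨A.coeff, a, fun n hn => A.coeff_eq_zero n (by omega)⟩

/-- `B` with its bound raised by `1`. -/
def PDO.succB (B : PDO R) : PDO R :=
  ⟨B.coeff, B.bound + 1, fun n hn => B.coeff_eq_zero n (by omega)⟩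

/-- `B` with its bound raised by `d`. -/
def PDO.raiseN (B : PDO R) (d : ℕ) : PDO R :=
  ⟨B.coeff, B.bound + d, fun n hn => B.coeff_eq_zero n (by omega)⟩

@[simp] lemma PDO.raiseTo_coeff (A : PDO R) (a : ℤ) (h : A.bound ≤ a) :
    (A.raiseTo a h).coeff = A.coeff := rfl
@[simp] lemma PDO.raiseTo_bound (A : PDO R) (a : ℤ) (h : A.bound ≤ a) :
    (A.raiseTo a h).bound = a := rfl
@[simp] lemma PDO.raiseN_coeff (B : PDO R) (d : ℕ) : (B.raiseN d).coeff = B.coeff := rfl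
@[simp] lemma PDO.raiseN_bound (B : PDO R) (d : ℕ) : (B.raiseN d).bound = B.bound + d := rfl
@[simp] lemma PDO.succB_coeff (B : PDO R) : B.succB.coeff = B.coeff := rfl
@[simp] lemma PDO.succB_bound (B : PDO R) : B.succB.bound = B.bound + 1 := rfl

/-- Raising the bound of the left factor does not change the composition coefficients. -/
lemma compCoeff_raiseA (D : Derivation ℚ R R) (A B : PDO R) (a : ℤ) (ha : A.bound ≤ a)
    (n : ℤ) : pdoCompCoeff D (A.raiseTo a ha) B n = pdoCompCoeff D A B n := by
  unfold pdoCompCoeff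
  simp only [PDO.raiseTo_coeff, PDO.raiseTo_bound]
  refine (Finset.sum_subset (Finset.range_subset_range.mpr (by omega)) ?_).symm
  intro p hp hnp
  simp only [Finset.mem_range] at hp hnp
  refine Finset.sum_eq_zero fun l _ => ?_
  rw [A.coeff_eq_zero _ (by omega), zero_mul]

private lemma addzero_helper {X Y Z : R} (hY : Y = 0) (hXZ : X = Z) : X + Y = Z := by
  rw [hY, add_zero, hXZ]

/-- Raising the bound of the right factor by one does not change the composition
coefficients. -/
lemma compCoeff_succB (D : Derivation ℚ R R) (A B : PDO R) (n : ℤ) :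
    pdoCompCoeff D A B.succB n = pdoCompCoeff D A B n := by
  unfold pdoCompCoeff
  simp only [PDO.succB_coeff, PDO.succB_bound]
  by_cases hn : n ≤ A.bound + B.bound + 1
  · rw [show (A.bound + (B.bound + 1) + 1 - n).toNat = (A.bound + B.bound + 1 - n).toNat + 1
      from by omega, Finset.sum_range_succ']
    refine addzero_helper ?_ ?_
    · refine Finset.sum_eq_zero fun l _ => ?_
      rw [B.coeff_eq_zero _ (by omega), iterD_zero, smul_zero, mul_zero]
    · refine Finset.sum_congr rfl fun p _ => ?_
      rw [Finset.sum_range_succ]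
      refine addzero_helper ?_ ?_
      · rw [B.coeff_eq_zero _ (by push_cast; omega), iterD_zero, smul_zero, mul_zero]
      · refine Finset.sum_congr rfl fun l _ => ?_
        rw [show n - (B.bound + 1) + ((p + 1 : ℕ) : ℤ) = n - B.bound + p from by push_cast; ring,
          show B.bound + 1 - ((p + 1 : ℕ) : ℤ) + (l : ℤ) = B.bound - p + l from by push_cast; ring]
  · rw [show (A.bound + (B.bound + 1) + 1 - n).toNat = 0 from by omega,
      show (A.bound + B.bound + 1 - n).toNat = 0 from by omega]
    simp

/-- Raising the bound of the right factor does not change the composition coefficients. -/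
lemma compCoeff_raiseN (D : Derivation ℚ R R) (A B : PDO R) (d : ℕ) (n : ℤ) :
    pdoCompCoeff D A (B.raiseN d) n = pdoCompCoeff D A B n := by
  induction d with
  | zero => refine pdoCompCoeff_ext D ?_ ?_ ?_ ?_ n <;> simp
  | succ d ih =>
      have h1 : pdoCompCoeff D A (B.raiseN (d + 1)) n
          = pdoCompCoeff D A (B.raiseN d).succB n := by
        refine pdoCompCoeff_ext D ?_ ?_ ?_ ?_ n <;> simp <;> ring
      rw [h1, compCoeff_succB, ih]

/-- The composition coefficients only depend on the coefficient families. -/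
lemma pdoCompCoeff_coeff_congr (D : Derivation ℚ R R) {A A' B B' : PDO R}
    (hA : A.coeff = A'.coeff) (hB : B.coeff = B'.coeff) (n : ℤ) :
    pdoCompCoeff D A B n = pdoCompCoeff D A' B' n := by
  have ha : A.bound ≤ max A.bound A'.bound := le_max_left _ _
  have ha' : A'.bound ≤ max A.bound A'.bound := le_max_right _ _
  rw [← compCoeff_raiseA D A B _ ha n, ← compCoeff_raiseA D A' B' _ ha' n,
    ← compCoeff_raiseN D _ B ((max B.bound B'.bound - B.bound).toNat) n,
    ← compCoeff_raiseN D _ B' ((max B.bound B'.bound - B'.bound).toNat) n]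
  refine pdoCompCoeff_ext D ?_ ?_ ?_ ?_ n
  · simpa using hA
  · simp
  · simpa using hB
  · simp only [PDO.raiseN_bound]
    omega

/-- Powers only depend on the coefficient family. -/
lemma pdoNpow_coeff_congr (D : Derivation ℚ R R) {B B' : PDO R}
    (h : B.coeff = B'.coeff) (s : ℕ) :
    (pdoNpow D B s).coeff = (pdoNpow D B' s).coeff := by
  induction s with
  | zero => rfl
  | succ s ih =>
      funext n
      exact pdoCompCoeff_coeff_congr D h ih n

lemma pdoNpow_bound (D : Derivation ℚ R R) (B : PDO R) (hb : B.bound = 1) (s : ℕ) :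
    (pdoNpow D B s).bound = (s : ℤ) := by
  induction s with
  | zero => rfl
  | succ s ih =>
      show B.bound + (pdoNpow D B s).bound = _
      rw [hb, ih]; push_cast; ring

lemma pdoCompCoeff_top (D : Derivation ℚ R R) (A B : PDO R) (n : ℤ)
    (hn : n = A.bound + B.bound) :
    pdoCompCoeff D A B n = A.coeff A.bound * B.coeff B.bound := by
  subst hn
  unfold pdoCompCoeff
  rw [show (A.bound + B.bound + 1 - (A.bound + B.bound)).toNat = 1 from by omega,
    Finset.sum_range_one, Finset.sum_range_one]
  rw [show A.bound + B.bound - B.bound + ((0 : ℕ) : ℤ) = A.bound from by push_cast; ring,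
    show B.bound - ((0 : ℕ) : ℤ) + ((0 : ℕ) : ℤ) = B.bound from by push_cast; ring]
  simp

lemma pdoNpow_top (D : Derivation ℚ R R) (B : PDO R) (hb : B.bound = 1) (h1 : B.coeff 1 = 1)
    (s : ℕ) : (pdoNpow D B s).coeff (s : ℤ) = 1 := by
  induction s with
  | zero => show pdoOne.coeff _ = 1; simp [pdoOne, pdoDelta]
  | succ s ih =>
      show pdoCompCoeff D B (pdoNpow D B s) _ = 1
      rw [pdoCompCoeff_top D _ _ _ (by rw [hb, pdoNpow_bound D B hb s]; push_cast; ring),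
        hb, pdoNpow_bound D B hb s, h1, ih, one_mul]

lemma pdoCompCoeff_eq_sum (D : Derivation ℚ R R) (A B : PDO R) (n b : ℤ) (N : ℕ)
    (hbb : B.bound = b) (hN : (A.bound + b + 1 - n).toNat = N) :
    pdoCompCoeff D A B n = ∑ p ∈ Finset.range N, ∑ l ∈ Finset.range (p + 1),
      A.coeff (n - b + p) * (genBinom (n - b + p) l • (⇑D)^[l] (B.coeff (b - p + l))) := by
  subst hbb; subst hN; rfl

/-- Key lemma: if two standard-form operators agree above degree `1 - m`, then the
coefficients of their `s`-th powers at degree `s - m` differ by `s` times the difference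
at degree `1 - m`. -/
lemma pdo_key (D : Derivation ℚ R R) (B B' : PDO R)
    (hb : B.bound = 1) (hb' : B'.bound = 1)
    (h1 : B.coeff 1 = 1) (h1' : B'.coeff 1 = 1) :
    ∀ s m : ℕ, 1 ≤ m →
      (∀ k : ℤ, 1 - (m : ℤ) < k → B.coeff k = B'.coeff k) →
      (pdoNpow D B s).coeff ((s : ℤ) - m) - (pdoNpow D B' s).coeff ((s : ℤ) - m)
        = (s : ℚ) • (B.coeff (1 - (m : ℤ)) - B'.coeff (1 - (m : ℤ))) := by
  intro s
  induction s with
  | zero =>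
      intro m hm hag
      have hne : ((0 : ℕ) : ℤ) - (m : ℤ) ≠ 0 := by omega
      show pdoOne.coeff _ - pdoOne.coeff _ = _
      simp [pdoOne, pdoDelta, hne]
  | succ s ih =>
      intro m hm hag
      have hCb : (pdoNpow D B s).bound = (s : ℤ) := pdoNpow_bound D B hb s
      have hC'b : (pdoNpow D B' s).bound = (s : ℤ) := pdoNpow_bound D B' hb' s
      have hCtop : (pdoNpow D B s).coeff (s : ℤ) = 1 := pdoNpow_top D B hb h1 s
      have hC'top : (pdoNpow D B' s).coeff (s : ℤ) = 1 := pdoNpow_top D B' hb' h1' s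
      -- the powers agree at all degrees above `s - m`
      have hagree : ∀ j : ℤ, (s : ℤ) - m < j →
          (pdoNpow D B s).coeff j = (pdoNpow D B' s).coeff j := by
        intro j hj
        rcases lt_trichotomy j (s : ℤ) with h | h | h
        · obtain ⟨m', h1m, hmm, rfl⟩ :
              ∃ m' : ℕ, 1 ≤ m' ∧ m' < m ∧ j = (s : ℤ) - m' :=
            ⟨(s - j).toNat, by omega, by omega, by omega⟩
          have hkey := ih m' h1m (fun k hk => hag k (by omega))
          rw [hag _ (by omega), sub_self, smul_zero] at hkey
          exact sub_eq_zero.mp hkey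
        · rw [h, hCtop, hC'top]
        · rw [(pdoNpow D B s).coeff_eq_zero j (by omega),
            (pdoNpow D B' s).coeff_eq_zero j (by omega)]
      -- expand both compositions
      set n : ℤ := ((s + 1 : ℕ) : ℤ) - m with hn
      have e1 : (pdoNpow D B (s + 1)).coeff n
          = ∑ p ∈ Finset.range (m + 1), ∑ l ∈ Finset.range (p + 1),
              B.coeff (n - (s : ℤ) + p) * (genBinom (n - (s : ℤ) + p) l •
                (⇑D)^[l] ((pdoNpow D B s).coeff ((s : ℤ) - p + l))) :=
        pdoCompCoeff_eq_sum D B (pdoNpow D B s) n (s : ℤ) (m + 1) hCb (by rw [hb]; omega)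
      have e1' : (pdoNpow D B' (s + 1)).coeff n
          = ∑ p ∈ Finset.range (m + 1), ∑ l ∈ Finset.range (p + 1),
              B'.coeff (n - (s : ℤ) + p) * (genBinom (n - (s : ℤ) + p) l •
                (⇑D)^[l] ((pdoNpow D B' s).coeff ((s : ℤ) - p + l))) :=
        pdoCompCoeff_eq_sum D B' (pdoNpow D B' s) n (s : ℤ) (m + 1) hC'b (by rw [hb']; omega)
      rw [e1, e1', ← Finset.sum_sub_distrib]
      have esplit : ∀ p ∈ Finset.range (m + 1),
          (∑ l ∈ Finset.range (p + 1),
              B.coeff (n - (s : ℤ) + p) * (genBinom (n - (s : ℤ) + p) l •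
                (⇑D)^[l] ((pdoNpow D B s).coeff ((s : ℤ) - p + l))))
          - (∑ l ∈ Finset.range (p + 1),
              B'.coeff (n - (s : ℤ) + p) * (genBinom (n - (s : ℤ) + p) l •
                (⇑D)^[l] ((pdoNpow D B' s).coeff ((s : ℤ) - p + l))))
          = (∑ l ∈ Finset.range (p + 1),
              (B.coeff (n - (s : ℤ) + p) - B'.coeff (n - (s : ℤ) + p)) *
                (genBinom (n - (s : ℤ) + p) l •
                  (⇑D)^[l] ((pdoNpow D B s).coeff ((s : ℤ) - p + l))))
            + (∑ l ∈ Finset.range (p + 1),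
              B'.coeff (n - (s : ℤ) + p) * (genBinom (n - (s : ℤ) + p) l •
                (⇑D)^[l] ((pdoNpow D B s).coeff ((s : ℤ) - p + l)
                  - (pdoNpow D B' s).coeff ((s : ℤ) - p + l)))) := by
        intro p _
        rw [← Finset.sum_sub_distrib, ← Finset.sum_add_distrib]
        refine Finset.sum_congr rfl fun l _ => ?_
        rw [iterD_sub, smul_sub]
        ring
      rw [Finset.sum_congr rfl esplit, Finset.sum_add_distrib]
      -- First sum: only `p = 0` contributes, giving `δ`.
      have hT1 : (∑ p ∈ Finset.range (m + 1), ∑ l ∈ Finset.range (p + 1),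
          (B.coeff (n - (s : ℤ) + p) - B'.coeff (n - (s : ℤ) + p)) *
            (genBinom (n - (s : ℤ) + p) l •
              (⇑D)^[l] ((pdoNpow D B s).coeff ((s : ℤ) - p + l))))
          = B.coeff (1 - (m : ℤ)) - B'.coeff (1 - (m : ℤ)) := by
        rw [Finset.sum_eq_single_of_mem 0 (Finset.mem_range.mpr (by omega))
          (fun p _ hp0 => Finset.sum_eq_zero fun l _ => by
            rw [hag _ (by omega), sub_self, zero_mul])]
        rw [Finset.sum_range_one,
          show n - (s : ℤ) + ((0 : ℕ) : ℤ) = 1 - (m : ℤ) from by omega,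
          show (s : ℤ) - ((0 : ℕ) : ℤ) + ((0 : ℕ) : ℤ) = (s : ℤ) from by omega]
        rw [Function.iterate_zero_apply, hCtop, genBinom_zero, one_smul, mul_one]
      -- Second sum: only `p = m, l = 0` contributes, giving `s • δ`.
      have hT2 : (∑ p ∈ Finset.range (m + 1), ∑ l ∈ Finset.range (p + 1),
          B'.coeff (n - (s : ℤ) + p) * (genBinom (n - (s : ℤ) + p) l •
            (⇑D)^[l] ((pdoNpow D B s).coeff ((s : ℤ) - p + l)
              - (pdoNpow D B' s).coeff ((s : ℤ) - p + l))))
          = (s : ℚ) • (B.coeff (1 - (m : ℤ)) - B'.coeff (1 - (m : ℤ))) := by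
        rw [Finset.sum_eq_single_of_mem m (Finset.mem_range.mpr (by omega))
          (fun p hp hp0 => Finset.sum_eq_zero fun l hl => by
            rw [hagree _ (by
              simp only [Finset.mem_range] at hp
              omega), sub_self, iterD_zero, smul_zero, mul_zero])]
        rw [Finset.sum_eq_single_of_mem 0 (Finset.mem_range.mpr (by omega))
          (fun l _ hl0 => by
            rw [hagree _ (by omega), sub_self, iterD_zero, smul_zero, mul_zero])]
        rw [show n - (s : ℤ) + (m : ℤ) = 1 from by omega,
          show (s : ℤ) - (m : ℤ) + ((0 : ℕ) : ℤ) = (s : ℤ) - (m : ℤ) from by omega]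
        rw [h1', genBinom_zero, one_smul, one_mul, Function.iterate_zero_apply]
        exact ih m hm hag
      rw [hT1, hT2]
      push_cast
      module

/-- Truncation of a coefficient family to a PDO with bound `1`. -/
def trunc (β : ℤ → R) : PDO R :=
  ⟨fun k => if k ≤ 1 then β k else 0, 1, fun n hn => if_neg (by omega)⟩

@[simp] lemma trunc_coeff (β : ℤ → R) (k : ℤ) :
    (trunc β).coeff k = if k ≤ 1 then β k else 0 := rfl
@[simp] lemma trunc_bound (β : ℤ → R) : (trunc β).bound = 1 := rfl

/-- Successive approximations to the coefficient family of the `r`-th root of `A`. -/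
noncomputable def approx (D : Derivation ℚ R R) (r : ℕ) (A : PDO R) : ℕ → ℤ → R
  | 0 => fun k => if k = 1 then 1 else 0
  | m + 1 => fun k =>
      if k = -(m : ℤ) then
        (r : ℚ)⁻¹ • (A.coeff ((r : ℤ) - ((m : ℤ) + 1)) -
          (pdoNpow D (trunc (approx D r A m)) r).coeff ((r : ℤ) - ((m : ℤ) + 1)))
      else approx D r A m k

lemma approx_one (D : Derivation ℚ R R) (r : ℕ) (A : PDO R) :
    ∀ m : ℕ, approx D r A m 1 = 1 := by
  intro m
  induction m with
  | zero => simp [approx]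
  | succ m ih => simp only [approx]; rw [if_neg (by omega)]; exact ih

lemma approx_low (D : Derivation ℚ R R) (r : ℕ) (A : PDO R) :
    ∀ m : ℕ, ∀ k : ℤ, k < 1 - (m : ℤ) → approx D r A m k = 0 := by
  intro m
  induction m with
  | zero => intro k hk; simp only [approx]; rw [if_neg (by omega)]
  | succ m ih =>
      intro k hk
      simp only [approx]
      rw [if_neg (by omega)]
      exact ih k (by omega)

lemma approx_stable (D : Derivation ℚ R R) (r : ℕ) (A : PDO R) (m j : ℕ) :
    ∀ k : ℤ, 1 - (m : ℤ) ≤ k → approx D r A (m + j) k = approx D r A m k := by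
  induction j with
  | zero => intro k _; rfl
  | succ j ih =>
      intro k hk
      show approx D r A ((m + j) + 1) k = _
      simp only [approx]
      rw [if_neg (by omega)]
      exact ih k hk

/-- The limiting coefficient family of the `r`-th root. -/
noncomputable def rootCoeff (D : Derivation ℚ R R) (r : ℕ) (A : PDO R) : ℤ → R :=
  fun k => approx D r A (1 - k).toNat k

lemma rootCoeff_eq (D : Derivation ℚ R R) (r : ℕ) (A : PDO R) (m : ℕ) (k : ℤ)
    (hk : 1 - (m : ℤ) ≤ k) : rootCoeff D r A k = approx D r A m k := by
  unfold rootCoeff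
  have h1 : 1 - ((1 - k).toNat : ℤ) ≤ k := by omega
  have h2 : m = (1 - k).toNat + (m - (1 - k).toNat) := by omega
  rw [h2, approx_stable D r A _ _ k h1]

/-- For any integer `r ≥ 2` and any pseudo-differential operator
`A = ∂ₓ^r + Σ_{n ≥ 1} a_n ∂ₓ^{r−n}` over a commutative differential ℚ-algebra, there exists
a pseudo-differential operator `B = ∂ₓ + Σ_{n ≥ 0} b_n ∂ₓ^{−n}` with `B^r = A`
(r-fold composition), and it is unique (as a coefficient family) among operators of
this form. -/
theorem pdo_rth_root_exists_unique (D : Derivation ℚ R R) (r : ℕ) (hr : 2 ≤ r)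
    (A : PDO R) (hAr : A.coeff (r : ℤ) = 1)
    (hAtop : ∀ n : ℤ, (r : ℤ) < n → A.coeff n = 0) :
    ∃ B : PDO R,
      (B.coeff 1 = 1 ∧ ∀ n : ℤ, 1 < n → B.coeff n = 0) ∧
      (pdoNpow D B r).coeff = A.coeff ∧
      ∀ B' : PDO R, (B'.coeff 1 = 1 ∧ ∀ n : ℤ, 1 < n → B'.coeff n = 0) →
        (pdoNpow D B' r).coeff = A.coeff → B'.coeff = B.coeff := by
  have hr0 : (r : ℚ) ≠ 0 := Nat.cast_ne_zero.mpr (by omega)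
  set Broot : PDO R := trunc (rootCoeff D r A) with hBroot
  have hB1 : Broot.coeff 1 = 1 := by
    rw [hBroot, trunc_coeff, if_pos le_rfl, rootCoeff_eq D r A 0 1 (by omega),
      approx_one]
  have hBhigh : ∀ n : ℤ, 1 < n → Broot.coeff n = 0 := by
    intro n hn; rw [hBroot, trunc_coeff, if_neg (by omega)]
  -- the power of the root equals A
  have hpow : (pdoNpow D Broot r).coeff = A.coeff := by
    funext n
    rcases lt_trichotomy n (r : ℤ) with h | h | h
    · -- n < r : n = r - (m + 1)
      obtain ⟨m, rfl⟩ : ∃ m : ℕ, n = (r : ℤ) - ((m : ℤ) + 1) :=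
        ⟨(r - n - 1).toNat, by omega⟩
      set Bm : PDO R := trunc (approx D r A m) with hBm
      have hBm1 : Bm.coeff 1 = 1 := by
        rw [hBm, trunc_coeff, if_pos le_rfl, approx_one]
      have hag : ∀ k : ℤ, 1 - ((m + 1 : ℕ) : ℤ) < k → Broot.coeff k = Bm.coeff k := by
        intro k hk
        rw [hBroot, hBm, trunc_coeff, trunc_coeff]
        by_cases hk1 : k ≤ 1
        · rw [if_pos hk1, if_pos hk1, rootCoeff_eq D r A m k (by push_cast at hk ⊢; omega)]
        · rw [if_neg hk1, if_neg hk1]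
      have hkey := pdo_key D Broot Bm rfl rfl hB1 hBm1 r (m + 1) (by omega) hag
      have hidx : ((r : ℕ) : ℤ) - ((m + 1 : ℕ) : ℤ) = (r : ℤ) - ((m : ℤ) + 1) := by
        push_cast; ring
      rw [hidx] at hkey
      have hδ1 : Broot.coeff (1 - ((m + 1 : ℕ) : ℤ))
          = (r : ℚ)⁻¹ • (A.coeff ((r : ℤ) - ((m : ℤ) + 1)) -
              (pdoNpow D (trunc (approx D r A m)) r).coeff ((r : ℤ) - ((m : ℤ) + 1))) := by
        rw [hBroot, trunc_coeff, if_pos (by push_cast; omega),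
          rootCoeff_eq D r A (m + 1) (1 - ((m + 1 : ℕ) : ℤ)) le_rfl]
        simp only [approx]
        rw [if_pos (by push_cast; ring)]
      have hδ2 : Bm.coeff (1 - ((m + 1 : ℕ) : ℤ)) = 0 := by
        rw [hBm, trunc_coeff, if_pos (by push_cast; omega)]
        exact approx_low D r A m _ (by push_cast; omega)
      rw [hδ1, hδ2, sub_zero, smul_smul, mul_inv_cancel₀ hr0, one_smul] at hkey
      rw [← hBm] at hkey
      linear_combination hkey
    · rw [h, pdoNpow_top D Broot rfl hB1 r, hAr]
    · rw [(pdoNpow D Broot r).coeff_eq_zero n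
        (by rw [pdoNpow_bound D Broot rfl r]; omega), hAtop n h]
  refine ⟨Broot, ⟨hB1, hBhigh⟩, hpow, ?_⟩
  -- uniqueness
  rintro B' ⟨h1', h2'⟩ hpow'
  set Bt : PDO R := trunc B'.coeff with hBt
  have hco : Bt.coeff = B'.coeff := by
    funext k
    rw [hBt, trunc_coeff]
    by_cases hk : k ≤ 1
    · rw [if_pos hk]
    · rw [if_neg hk, (h2' k (by omega)).symm]
  have hpowt : (pdoNpow D Bt r).coeff = A.coeff :=
    (pdoNpow_coeff_congr D hco r).trans hpow'
  have hBt1 : Bt.coeff 1 = 1 := by rw [hco]; exact h1'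
  have main : ∀ m : ℕ, ∀ k : ℤ, 1 - (m : ℤ) ≤ k → B'.coeff k = Broot.coeff k := by
    intro m
    induction m with
    | zero =>
        intro k hk
        rcases eq_or_lt_of_le (show (1 : ℤ) ≤ k from by omega) with h | h
        · rw [← h, h1', hB1]
        · rw [h2' k h, hBhigh k h]
    | succ m ih =>
        intro k hk
        by_cases hk1 : 1 - (m : ℤ) ≤ k
        · exact ih k hk1
        have hag : ∀ k' : ℤ, 1 - ((m + 1 : ℕ) : ℤ) < k' → Bt.coeff k' = Broot.coeff k' := by
          intro k' hk'
          rw [hco]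
          exact ih k' (by push_cast at hk'; omega)
        have hkey := pdo_key D Bt Broot rfl rfl hBt1 hB1 r (m + 1) (by omega) hag
        rw [hpowt, hpow, sub_self] at hkey
        have hδ : Bt.coeff (1 - ((m + 1 : ℕ) : ℤ)) - Broot.coeff (1 - ((m + 1 : ℕ) : ℤ)) = 0 := by
          have := congrArg (fun x : R => (r : ℚ)⁻¹ • x) hkey
          simpa [smul_smul, inv_mul_cancel₀ hr0] using this.symm
        have hk2 : k = 1 - ((m + 1 : ℕ) : ℤ) := by push_cast at hk hk1 ⊢; omega
        rw [hk2, ← hco]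
        exact sub_eq_zero.mp hδ
  funext k
  exact main (1 - k).toNat k (by omega)
end

section
/- For any two pseudo-differential operators A and B over a commutative differential ring (R, ∂) containing ℚ, the residue of their commutator is a total derivative: res(A∘B − B∘A) lies in the image of ∂ : R → R. -/
open Finset

variable {R : Type*} [CommRing R] [Algebra ℚ R]

lemma genBinom_reflect (k : ℤ) (l : ℕ) :
    genBinom ((l : ℤ) - 1 - k) l = (-1 : ℚ) ^ l * genBinom k l := by
  unfold genBinom
  rw [mul_div_assoc']
  congr 1
  calc ∏ i ∈ range l, ((((l : ℤ) - 1 - k : ℤ) : ℚ) - (i : ℚ))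
      = ∏ i ∈ range l, -((k : ℚ) - ((l - 1 - i : ℕ) : ℚ)) := by
        refine prod_congr rfl fun i hi => ?_
        have hi' : i < l := mem_range.mp hi
        have h : ((l - 1 - i : ℕ) : ℚ) = (l : ℚ) - 1 - i := by
          rw [show (l - 1 - i : ℕ) = l - (i + 1) from by omega, Nat.cast_sub (by omega)]
          push_cast; ring
        rw [h]; push_cast; ring
    _ = ∏ i ∈ range l, -((k : ℚ) - (i : ℚ)) :=
        prod_range_reflect (fun j : ℕ => -((k : ℚ) - (j : ℚ))) l
    _ = ∏ i ∈ range l, ((-1 : ℚ) * ((k : ℚ) - (i : ℚ))) :=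
        prod_congr rfl fun i _ => by ring
    _ = (-1 : ℚ) ^ l * ∏ i ∈ range l, ((k : ℚ) - (i : ℚ)) := by
        rw [prod_mul_distrib, prod_const, card_range]

lemma iterate_D_smul (D : Derivation ℚ R R) (c : ℚ) (x : R) (n : ℕ) :
    (⇑D)^[n] (c • x) = c • (⇑D)^[n] x := by
  induction n with
  | zero => rfl
  | succ n ih => rw [Function.iterate_succ_apply', Function.iterate_succ_apply', ih, D.map_smul]

lemma key_lemma (D : Derivation ℚ R R) (a : R) (l : ℕ) : ∀ b : R,
    a * (⇑D)^[l] b - (-1:ℚ)^l • (b * (⇑D)^[l] a)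
      = D (∑ i ∈ range l, (-1:ℚ)^i • ((⇑D)^[i] a * (⇑D)^[l-1-i] b)) := by
  induction l with
  | zero => intro b; simp [mul_comm]
  | succ l ih =>
    intro b
    rw [sum_range_succ]
    have h1 : (l + 1 - 1 - l : ℕ) = 0 := by omega
    rw [h1]
    have h2 : ∀ i ∈ range l, (-1:ℚ)^i • ((⇑D)^[i] a * (⇑D)^[l+1-1-i] b)
        = (-1:ℚ)^i • ((⇑D)^[i] a * (⇑D)^[l-1-i] (D b)) := by
      intro i hi
      have hi' : i < l := mem_range.mp hi
      have : (l + 1 - 1 - i : ℕ) = (l - 1 - i) + 1 := by omega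
      rw [this, Function.iterate_succ_apply]
    rw [sum_congr rfl h2, map_add, ← ih (D b), D.map_smul, Derivation.leibniz,
      Function.iterate_succ_apply, Function.iterate_succ_apply']
    simp only [Function.iterate_zero_apply, pow_succ, smul_smul]
    simp only [smul_add, Algebra.smul_def, map_mul, map_neg, map_one, map_pow,
      Algebra.algebraMap_self_apply]
    ring

/-- For any two pseudo-differential operators `A` and `B` over a
commutative differential ring `(R, ∂)` containing `ℚ`, the residue
`res(A∘B − B∘A)` of their commutator (where `res(Σ a_n ∂ₓ^n) := a_{−1}`) is a total
derivative: it lies in the image of `∂ : R → R`. -/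
theorem res_commutator_is_total_derivative (D : Derivation ℚ R R) (A B : PDO R) :
    ∃ g : R, (pdoComp D A B).coeff (-1) - (pdoComp D B A).coeff (-1) = D g := by

  have hAB : (pdoComp D A B).coeff (-1) = pdoCompCoeff D A B (-1) := rfl
  have hBA : (pdoComp D B A).coeff (-1) = pdoCompCoeff D B A (-1) := rfl
  by_cases hN : A.bound + B.bound + 2 <= 0
  · refine ⟨0, ?_⟩
    have e1 : (A.bound + B.bound + 1 - (-1)).toNat = 0 := by omega
    have e2 : (B.bound + A.bound + 1 - (-1)).toNat = 0 := by omega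
    rw [hAB, hBA]
    unfold pdoCompCoeff
    rw [e1, e2]
    simp
  · push_neg at hN
    set N : ℕ := (A.bound + B.bound + 2).toNat with hNdef
    have hNZ : (N : ℤ) = A.bound + B.bound + 2 := Int.toNat_of_nonneg (by omega)
    set T : Finset ((_ : ℕ) × ℕ) := (range N).sigma (fun p => range (p + 1)) with hT
    set fAB : ((_ : ℕ) × ℕ) → R := fun x =>
      A.coeff (-1 - B.bound + x.1) *
        (genBinom (-1 - B.bound + x.1) x.2 • (⇑D)^[x.2] (B.coeff (B.bound - x.1 + x.2)))
      with hfAB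
    set fBA : ((_ : ℕ) × ℕ) → R := fun x =>
      B.coeff (-1 - A.bound + x.1) *
        (genBinom (-1 - A.bound + x.1) x.2 • (⇑D)^[x.2] (A.coeff (A.bound - x.1 + x.2)))
      with hfBA
    have eAB : pdoCompCoeff D A B (-1) = ∑ x ∈ T, fAB x := by
      rw [pdoCompCoeff, show (A.bound + B.bound + 1 - (-1)).toNat = N from by omega,
        Finset.sum_sigma']
    have eBA : pdoCompCoeff D B A (-1) = ∑ x ∈ T, fBA x := by
      rw [pdoCompCoeff, show (B.bound + A.bound + 1 - (-1)).toNat = N from by omega,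
        Finset.sum_sigma']
    set σ : ((_ : ℕ) × ℕ) → ((_ : ℕ) × ℕ) := fun x => ⟨N - 1 - x.1 + x.2, x.2⟩ with hσ
    have hmem : ∀ x ∈ T, σ x ∈ T := by
      rintro ⟨p, l⟩ hx
      simp only [hT, hσ, mem_sigma, mem_range] at hx ⊢
      omega
    have hinv : ∀ x ∈ T, σ (σ x) = x := by
      rintro ⟨p, l⟩ hx
      simp only [hT, mem_sigma, mem_range] at hx
      have h : N - 1 - (N - 1 - p + l) + l = p := by omega
      simp only [hσ, h]
    have eBA2 : ∑ x ∈ T, fBA x = ∑ x ∈ T, fBA (σ x) :=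
      Finset.sum_nbij' σ σ hmem hmem hinv hinv (fun x hx => by rw [hinv x hx])
    refine ⟨∑ x ∈ T, genBinom (-1 - B.bound + x.1) x.2 •
        ∑ i ∈ range x.2, (-1:ℚ)^i • ((⇑D)^[i] (A.coeff (-1 - B.bound + x.1)) *
          (⇑D)^[x.2 - 1 - i] (B.coeff (B.bound - x.1 + x.2))), ?_⟩
    rw [hAB, hBA, eAB, eBA, eBA2, ← Finset.sum_sub_distrib, map_sum]
    refine sum_congr rfl ?_
    rintro ⟨p, l⟩ hx
    simp only [hT, mem_sigma, mem_range] at hx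
    obtain ⟨hp, hl⟩ := hx
    simp only [hfAB, hfBA, hσ]
    rw [show (-1 - A.bound + ((N - 1 - p + l : ℕ) : ℤ)) = B.bound - p + l from by omega,
      show (A.bound - ((N - 1 - p + l : ℕ) : ℤ) + l) = -1 - B.bound + p from by omega,
      show genBinom (B.bound - (p:ℤ) + l) l = (-1:ℚ)^l * genBinom (-1 - B.bound + p) l from by
        rw [show (B.bound - (p:ℤ) + l) = ((l:ℕ):ℤ) - 1 - (-1 - B.bound + p) from by omega,
          genBinom_reflect],
      D.map_smul, ← key_lemma D (A.coeff (-1 - B.bound + p)) l (B.coeff (B.bound - p + l)),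
      mul_smul_comm, mul_smul_comm, smul_sub, smul_smul,
      mul_comm (genBinom (-1 - B.bound + (p:ℤ)) l) ((-1:ℚ)^l)]
end

section
/- Let O be a first-order linear differential operator on the coefficient ring of pseudo-differential operators satisfying [O, ∂/∂T_1] = ∂/∂T_1, and extend z∂_z + O to symbols by acting on coefficients with O and on powers of z by z∂_z. If pseudo-differential operators A and B satisfy (z∂_z + O)Â = a·Â and (z∂_z + O)B̂ = b·B̂ for integers a, b, then (z∂_z + O) applied to the symbol of A∘B equals (a + b) times the symbol of A∘B. -/
open Finset

variable {R : Type*} [CommRing R] [Algebra ℚ R]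

lemma iter_map_smul (D : Derivation ℚ R R) (l : ℕ) (q : ℚ) (x : R) :
    (⇑D)^[l] (q • x) = q • (⇑D)^[l] x := by
  induction l generalizing x with
  | zero => simp
  | succ l ih => rw [Function.iterate_succ_apply, Function.iterate_succ_apply, D.map_smul, ih]

lemma O_iter (D : Derivation ℚ R R) (O : R →ₗ[ℚ] R)
    (hComm : ∀ f : R, O (D f) = D (O f) + D f) (l : ℕ) (f : R) :
    O ((⇑D)^[l] f) = (⇑D)^[l] (O f) + (l : ℚ) • (⇑D)^[l] f := by
  induction l generalizing f with
  | zero => simp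
  | succ l ih =>
      rw [Function.iterate_succ_apply', hComm, ih, map_add, D.map_smul,
        Function.iterate_succ_apply']
      push_cast
      rw [add_smul, one_smul]
      ring_nf

/-- Let `O` be a first-order linear differential operator (a ℚ-linear
derivation-like operator satisfying the Leibniz rule) on the coefficient ring, with
`[O, ∂/∂T_1] = ∂/∂T_1`, where `∂/∂T_1 = D` is the derivation used in the composition of
pseudo-differential operators.  Extend `z∂_z + O` to symbols by letting `O` act on
coefficients and `z∂_z` on powers of `z`, i.e. `((z∂_z + O)Â)ₙ = n·aₙ + O(aₙ)`.
If `(z∂_z + O)Â = a·Â` and `(z∂_z + O)B̂ = b·B̂` for integers `a, b`, then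
`(z∂_z + O)` applied to the symbol of `A∘B` equals `(a + b)` times that symbol. -/
theorem symbol_eigen_mul (D : Derivation ℚ R R) (O : R →ₗ[ℚ] R)
    (hLeib : ∀ f g : R, O (f * g) = f * O g + g * O f)
    (hComm : ∀ f : R, O (D f) = D (O f) + D f)
    (A B : PDO R) (a b : ℤ)
    (hA : ∀ n : ℤ, n • A.coeff n + O (A.coeff n) = a • A.coeff n)
    (hB : ∀ n : ℤ, n • B.coeff n + O (B.coeff n) = b • B.coeff n) :
    ∀ n : ℤ, n • (pdoComp D A B).coeff n + O ((pdoComp D A B).coeff n)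
      = (a + b) • (pdoComp D A B).coeff n := by
  intro n
  show n • pdoCompCoeff D A B n + O (pdoCompCoeff D A B n)
      = (a + b) • pdoCompCoeff D A B n
  unfold pdoCompCoeff
  simp only [map_sum, Finset.smul_sum, ← Finset.sum_add_distrib]
  refine Finset.sum_congr rfl fun p _ => Finset.sum_congr rfl fun l _ => ?_
  set k : ℤ := n - B.bound + p with hk
  set j : ℤ := B.bound - p + l with hj
  have hOu : O (A.coeff k) = ((a : ℚ) - (k : ℚ)) • A.coeff k := by
    rw [sub_smul, Int.cast_smul_eq_zsmul, Int.cast_smul_eq_zsmul]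
    exact eq_sub_of_add_eq' (hA k)
  have hOv : O (B.coeff j) = ((b : ℚ) - (j : ℚ)) • B.coeff j := by
    rw [sub_smul, Int.cast_smul_eq_zsmul, Int.cast_smul_eq_zsmul]
    exact eq_sub_of_add_eq' (hB j)
  rw [hLeib, map_smul, O_iter D O hComm l, hOv, iter_map_smul, hOu,
    ← Int.cast_smul_eq_zsmul ℚ n, ← Int.cast_smul_eq_zsmul ℚ (a + b)]
  have hkq : (k : ℚ) = (n : ℚ) - (B.bound : ℚ) + (p : ℚ) := by rw [hk]; push_cast; ring
  have hjq : (j : ℚ) = (B.bound : ℚ) - (p : ℚ) + (l : ℚ) := by rw [hj]; push_cast; ring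
  rw [hkq, hjq]
  push_cast
  simp only [Algebra.smul_def, map_add, map_sub, map_one, map_natCast, map_intCast]
  ring
end

section
/- Let O be a first-order differential operator on the coefficient ring (a derivation plus scalar operations) with [O, ∂_{T_1}] = ∂_{T_1}. Then for any pseudo-differential operator A and any f in the coefficient ring, O(A_+ f) = A_+(O f) + C f, where C is the differential operator whose symbol is (z∂_z + O) applied to the symbol of A_+. -/
open Finset

variable {R : Type*} [CommRing R] [Algebra ℚ R]

/-- The action of the differential-operator part `A₊ = Σ_{0 ≤ n} aₙ ∂ₓ^n` of a
pseudo-differential operator `A` on an element `f` of the coefficient ring, where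
`∂ₓ = D`. -/
def pdoPlusAct (D : Derivation ℚ R R) (A : PDO R) (f : R) : R :=
  ∑ n ∈ Finset.range (A.bound.toNat + 1), A.coeff (n : ℤ) * (⇑D)^[n] f

/-- Let `O` be a first-order linear differential operator (ℚ-linear and
satisfying the Leibniz rule) on the coefficient ring, with `[O, ∂_{T_1}] = ∂_{T_1}`
(`∂_{T_1} = D`).  Then for any pseudo-differential operator `A` and any `f` in the
coefficient ring, `O(A₊ f) = A₊(O f) + C f`, where `C` is the differential operator whose
symbol is `(z∂_z + O)` applied to the symbol of `A₊`, i.e.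
`C = Σ_{n ≥ 0} (n·aₙ + O(aₙ)) ∂ₓ^n`. -/
theorem O_of_plus_action (D : Derivation ℚ R R) (O : R →ₗ[ℚ] R)
    (hLeib : ∀ f g : R, O (f * g) = f * O g + g * O f)
    (hComm : ∀ f : R, O (D f) = D (O f) + D f)
    (A : PDO R) (f : R) :
    O (pdoPlusAct D A f) = pdoPlusAct D A (O f) +
      ∑ n ∈ Finset.range (A.bound.toNat + 1),
        ((n : ℤ) • A.coeff (n : ℤ) + O (A.coeff (n : ℤ))) * (⇑D)^[n] f := by
  have key : ∀ (n : ℕ) (g : R), O ((⇑D)^[n] g) = (⇑D)^[n] (O g) + (n : ℤ) • (⇑D)^[n] g := by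
    intro n
    induction n with
    | zero => intro g; simp
    | succ n ih =>
      intro g
      rw [Function.iterate_succ_apply', hComm, ih g, map_add, map_zsmul,
        Function.iterate_succ_apply']
      push_cast
      rw [add_smul, one_smul]
      abel
  unfold pdoPlusAct
  rw [map_sum, ← Finset.sum_add_distrib]
  refine Finset.sum_congr rfl fun n _ => ?_
  rw [hLeib, key n f]
  rw [mul_add]
  have : A.coeff (n : ℤ) * ((n : ℤ) • (⇑D)^[n] f) = ((n : ℤ) • A.coeff (n : ℤ)) * (⇑D)^[n] f := by
    rw [zsmul_eq_mul, zsmul_eq_mul]; ring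
  rw [this]
  ring
end
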